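/- For every point w ∈ X^ℕ, the stabilizer St_{G_A}(w) = {g ∈ G_A : g(w) = w} is a cyclic group, i.e., it is generated by a single element. -/

import Mathlib

/-!
We formalize the automaton `A` of the paper: alphabet `X = {1,2,3}` is encoded as
`Fin 3` (letter `i+1` ↦ `i`), states `a, b, c` are encoded as `0, 1, 2 : Fin 3`.
Each state induces a permutation of the space `ℕ → Fin 3` of infinite sequences.

Note on conventions: in the paper, products of tree automorphisms compose
left-to-right (in a word `s₁s₂⋯sₙ`, the letter `s₁` acts first); in Mathlib,
`(f * g) w = f (g w)`, i.e. the right factor acts first.  Hence a paper word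
`uv` is rendered as the Lean product `v * u`; e.g. the paper's `α = ab⁻¹`
(apply `a`, then `b⁻¹`) is `b⁻¹ * a` below.
-/

namespace Lamplighter

section Generic

variable {S X : Type*}

/-- The state of the automaton after reading the first `n` letters of `w`, starting at `s`. -/
def run (nxt : S → X → S) (s : S) (w : ℕ → X) : ℕ → S
  | 0 => s
  | n + 1 => nxt (run nxt s w n) (w n)

/-- The output sequence of the automaton started in state `s` reading `w`. -/
def fwd (nxt : S → X → S) (out : S → Equiv.Perm X) (s : S) (w : ℕ → X) : ℕ → X :=
  fun n => out (run nxt s w n) (w n)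

/-- Transition function of the inverse automaton. -/
def invNxt (nxt : S → X → S) (out : S → Equiv.Perm X) (s : S) (y : X) : S :=
  nxt s ((out s).symm y)

/-- The action of the inverse automaton, started at state `s`. -/
def bwd (nxt : S → X → S) (out : S → Equiv.Perm X) (s : S) (y : ℕ → X) : ℕ → X :=
  fun n => (out (run (invNxt nxt out) s y n)).symm (y n)

theorem run_inv_fwd (nxt : S → X → S) (out : S → Equiv.Perm X) (s : S) (w : ℕ → X) :
    ∀ n, run (invNxt nxt out) s (fwd nxt out s w) n = run nxt s w n := by
  intro n
  induction n with
  | zero => rfl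
  | succ n ih => simp [run, ih, invNxt, fwd]

theorem run_bwd (nxt : S → X → S) (out : S → Equiv.Perm X) (s : S) (y : ℕ → X) :
    ∀ n, run nxt s (bwd nxt out s y) n = run (invNxt nxt out) s y n := by
  intro n
  induction n with
  | zero => rfl
  | succ n ih => simp [run, ih, bwd, invNxt]

/-- The permutation of the space of infinite sequences induced by state `s`
of an invertible automaton. -/
def statePerm (nxt : S → X → S) (out : S → Equiv.Perm X) (s : S) : Equiv.Perm (ℕ → X) where
  toFun := fwd nxt out s
  invFun := bwd nxt out s
  left_inv := fun w => funext fun n => by simp [bwd, run_inv_fwd, fwd]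
  right_inv := fun y => funext fun n => by simp [fwd, run_bwd, bwd]

end Generic

/-- The alphabet `X = {1,2,3}`, encoded as `Fin 3`. -/
abbrev X3 := Fin 3

/-- Transition function of the automaton `A` (states `a = 0`, `b = 1`, `c = 2`):
from `a`: `1 ↦ a, 2 ↦ b, 3 ↦ c`; from `b`: `1 ↦ c, 2 ↦ a, 3 ↦ b`;
from `c`: `1 ↦ b, 2 ↦ c, 3 ↦ a`. -/
def nxtA : Fin 3 → X3 → Fin 3 := ![![0, 1, 2], ![2, 0, 1], ![1, 2, 0]]

/-- Output permutations of the automaton `A`: state `a` acts on letters as the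
transposition `(2 3)`, state `b` as `(1 3)`, state `c` as `(1 2)`. -/
def outA : Fin 3 → Equiv.Perm X3 := ![Equiv.swap 1 2, Equiv.swap 0 2, Equiv.swap 0 1]

/-- The permutation of `X^ℕ` given by state `a`. -/
def a : Equiv.Perm (ℕ → X3) := statePerm nxtA outA 0

/-- The permutation of `X^ℕ` given by state `b`. -/
def b : Equiv.Perm (ℕ → X3) := statePerm nxtA outA 1

/-- The permutation of `X^ℕ` given by state `c`. -/
def c : Equiv.Perm (ℕ → X3) := statePerm nxtA outA 2

/-- The group `G_A` generated by the automaton `A`. -/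
def GA : Subgroup (Equiv.Perm (ℕ → X3)) := Subgroup.closure {a, b, c}

/-- The element `α = ab⁻¹` of the paper (first apply `a`, then `b⁻¹`). -/
def α : Equiv.Perm (ℕ → X3) := b⁻¹ * a

/-- The set `W` of permutations acting coordinatewise by a sequence of even
permutations of the alphabet. -/
def W : Set (Equiv.Perm (ℕ → X3)) :=
  {g | ∃ π : ℕ → Equiv.Perm X3, (∀ n, Equiv.Perm.sign (π n) = 1) ∧
    ∀ (w : ℕ → X3) (n : ℕ), g w n = π n (w n)}

/-- The subgroup `N` generated by the conjugates `a⁻ⁿ α aⁿ`, `n ∈ ℤ`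
(in Lean's composition order: `aⁿ * α * a⁻ⁿ`). -/
def N : Subgroup (Equiv.Perm (ℕ → X3)) :=
  Subgroup.closure {g | ∃ n : ℤ, g = a ^ n * α * a ^ (-n)}

section Proof

open Fin.CommRing

/-- The automaton's transition function is subtraction mod 3. -/
lemma nxtA_eq : ∀ s x : Fin 3, nxtA s x = x - s := by decide

/-- The automaton's output function is `x ↦ -x - s`. -/
lemma outA_eq : ∀ s x : Fin 3, outA s x = -x - s := by decide

lemma run_succ (s : Fin 3) (w : ℕ → X3) (n : ℕ) :
    run nxtA s w (n + 1) = w n - run nxtA s w n := by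
  show nxtA _ _ = _
  rw [nxtA_eq]

lemma statePerm_apply (s : Fin 3) (w : ℕ → X3) (n : ℕ) :
    statePerm nxtA outA s w n = -(w n) - run nxtA s w n := outA_eq _ _

/-- The permutation adding a fixed sequence `c` coordinatewise. -/
def add (c : ℕ → Fin 3) : Equiv.Perm (ℕ → X3) where
  toFun w := fun n => w n + c n
  invFun w := fun n => w n - c n
  left_inv w := funext fun n => add_sub_cancel_right _ _
  right_inv w := funext fun n => sub_add_cancel _ _

lemma add_apply (c : ℕ → Fin 3) (w : ℕ → X3) (n : ℕ) : add c w n = w n + c n := rfl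

lemma add_mul_add (c c' : ℕ → Fin 3) : add c * add c' = add (fun n => c n + c' n) := by
  refine Equiv.ext fun w => funext fun n => ?_
  show (add c' w) n + c n = w n + (c n + c' n)
  rw [add_apply]; ring

lemma add_zero_eq_one : add (fun _ => 0) = 1 := by
  refine Equiv.ext fun w => funext fun n => ?_
  show w n + 0 = w n
  ring

lemma add_inv (c : ℕ → Fin 3) : (add c)⁻¹ = add (fun n => -(c n)) := by
  rw [eq_comm, eq_inv_iff_mul_eq_one, add_mul_add]
  convert add_zero_eq_one using 2
  funext n; ring

/-- The "carry" sequence governing how `a` conjugates an `add`. -/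
def del (c : ℕ → Fin 3) : ℕ → Fin 3
  | 0 => 0
  | n + 1 => -(c n) - del c n

/-- Conjugation of `add c` by `a`. -/
def T (c : ℕ → Fin 3) : ℕ → Fin 3 := fun n => del c n - c n

def eps (d : ℕ → Fin 3) : ℕ → Fin 3
  | 0 => 0
  | n + 1 => d n + eps d n

/-- Conjugation of `add c` by `a⁻¹`. -/
def Tinv (d : ℕ → Fin 3) : ℕ → Fin 3 := fun n => eps d n - d n

lemma char3 : ∀ x : Fin 3, -x - x = x := by decide

lemma T_Tinv (d : ℕ → Fin 3) : T (Tinv d) = d := by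
  have key : ∀ n, del (Tinv d) n = eps d n := by
    intro n
    induction n with
    | zero => rfl
    | succ n ih =>
      show -(Tinv d n) - del (Tinv d) n = d n + eps d n
      rw [ih, Tinv]
      linear_combination char3 (eps d n)
  funext n
  show del (Tinv d) n - Tinv d n = d n
  rw [key, Tinv]; ring

lemma run_add (s : Fin 3) (c : ℕ → Fin 3) (w : ℕ → X3) :
    ∀ n, run nxtA s (fun m => w m + c m) n = run nxtA s w n - del c n := by
  intro n
  induction n with
  | zero => show s = s - 0; ring
  | succ n ih =>
    rw [run_succ, run_succ, ih]
    show w n + c n - _ = _ - (-(c n) - del c n)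
    ring

lemma a_conj_add (c : ℕ → Fin 3) : a * add c = add (T c) * a := by
  refine Equiv.ext fun w => funext fun n => ?_
  show statePerm nxtA outA 0 (fun m => w m + c m) n = statePerm nxtA outA 0 w n + T c n
  rw [statePerm_apply, statePerm_apply, run_add, T]
  ring

lemma a_inv_conj_add (c : ℕ → Fin 3) : a⁻¹ * add c = add (Tinv c) * a⁻¹ := by
  have h : a * add (Tinv c) = add c * a := by rw [a_conj_add, T_Tinv]
  have h2 : a * (a⁻¹ * add c) = a * (add (Tinv c) * a⁻¹) := by
    rw [← mul_assoc, mul_inv_cancel, one_mul, ← mul_assoc, h, mul_assoc, mul_inv_cancel,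
      mul_one]
  exact mul_left_cancel h2

lemma zpow_conj_add (k : ℤ) : ∀ c : ℕ → Fin 3, ∃ c', a ^ k * add c = add c' * a ^ k := by
  induction k using Int.induction_on with
  | zero => exact fun c => ⟨c, by simp⟩
  | succ k ih =>
    intro c
    obtain ⟨c', h⟩ := ih (T c)
    refine ⟨c', ?_⟩
    rw [zpow_add_one, mul_assoc, a_conj_add, ← mul_assoc, h, mul_assoc]
  | pred k ih =>
    intro c
    obtain ⟨c', h⟩ := ih (Tinv c)
    refine ⟨c', ?_⟩
    rw [zpow_sub_one, mul_assoc, a_inv_conj_add, ← mul_assoc, h, mul_assoc]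

lemma form_mul (c : ℕ → Fin 3) (k : ℤ) (c' : ℕ → Fin 3) (k' : ℤ) :
    ∃ c'', add c * a ^ k * (add c' * a ^ k') = add c'' * a ^ (k + k') := by
  obtain ⟨d, hd⟩ := zpow_conj_add k c'
  refine ⟨fun n => c n + d n, ?_⟩
  rw [mul_assoc, ← mul_assoc (a ^ k), hd, ← mul_assoc, ← mul_assoc, add_mul_add,
    mul_assoc, ← zpow_add]

lemma form_inv (c : ℕ → Fin 3) (k : ℤ) :
    ∃ c'', (add c * a ^ k)⁻¹ = add c'' * a ^ (-k) := by
  obtain ⟨d, hd⟩ := zpow_conj_add (-k) (fun n => -(c n))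
  refine ⟨d, ?_⟩
  rw [mul_inv_rev, add_inv, ← zpow_neg, hd]

lemma run_state (s : Fin 3) (w : ℕ → X3) :
    ∀ n, run nxtA s w n = run nxtA 0 w n + (-1) ^ n * s := by
  intro n
  induction n with
  | zero => show s = (0 : Fin 3) + 1 * s; ring
  | succ n ih =>
    rw [run_succ, run_succ, ih]
    ring

lemma state_form (s : Fin 3) :
    statePerm nxtA outA s = add (fun n => -((-1) ^ n * s)) * a ^ (1 : ℤ) := by
  rw [zpow_one]
  refine Equiv.ext fun w => funext fun n => ?_
  show statePerm nxtA outA s w n = statePerm nxtA outA 0 w n + -((-1) ^ n * s)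
  rw [statePerm_apply, statePerm_apply, run_state]
  ring

lemma mem_form : ∀ g ∈ GA, ∃ (c : ℕ → Fin 3) (k : ℤ), g = add c * a ^ k := by
  intro g hg
  induction hg using Subgroup.closure_induction with
  | mem x hx =>
    rcases hx with rfl | rfl | rfl
    · exact ⟨fun _ => 0, 1, by rw [add_zero_eq_one, one_mul, zpow_one]⟩
    · exact ⟨_, 1, state_form 1⟩
    · exact ⟨_, 1, state_form 2⟩
  | one => exact ⟨fun _ => 0, 0, by rw [add_zero_eq_one, one_mul, zpow_zero]⟩
  | mul x y hx hy ihx ihy =>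
    obtain ⟨c, k, rfl⟩ := ihx
    obtain ⟨c', k', rfl⟩ := ihy
    obtain ⟨c'', h⟩ := form_mul c k c' k'
    exact ⟨c'', k + k', h⟩
  | inv x hx ihx =>
    obtain ⟨c, k, rfl⟩ := ihx
    obtain ⟨c'', h⟩ := form_inv c k
    exact ⟨c'', -k, h⟩

lemma form_zpow (c : ℕ → Fin 3) (m : ℤ) :
    ∀ q : ℤ, ∃ c', (add c * a ^ m) ^ q = add c' * a ^ (q * m) := by
  intro q
  induction q using Int.induction_on with
  | zero => exact ⟨fun _ => 0, by rw [add_zero_eq_one, one_mul, zpow_zero, zero_mul, zpow_zero]⟩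
  | succ q ih =>
    obtain ⟨cq, h⟩ := ih
    obtain ⟨c', h'⟩ := form_mul cq (q * m) c m
    refine ⟨c', ?_⟩
    rw [zpow_add_one, h, h', add_mul, one_mul]
  | pred q ih =>
    obtain ⟨cq, h⟩ := ih
    obtain ⟨ci, hi⟩ := form_inv c m
    obtain ⟨c', h'⟩ := form_mul cq (-q * m) ci (-m)
    refine ⟨c', ?_⟩
    rw [zpow_sub_one, h, hi, h']
    ring_nf

end Proof


/-- For every point `w ∈ X^ℕ`, the stabilizer
`St_{G_A}(w) = {g ∈ G_A : g(w) = w}` is a cyclic group: it contains an element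
`g₀` of which every element of the stabilizer is an integer power. -/
theorem stabilizer_cyclic :
    ∀ w : ℕ → X3, ∃ g₀, g₀ ∈ GA ∧ g₀ w = w ∧
      ∀ h ∈ GA, h w = w → ∃ k : ℤ, h = g₀ ^ k := by
  intro w
  set K : AddSubgroup ℤ :=
    { carrier := {k | ∃ c, add c * a ^ k ∈ GA ∧ (add c * a ^ k) w = w}
      zero_mem' := ⟨fun _ => 0, by
        rw [add_zero_eq_one, one_mul, zpow_zero]
        exact ⟨one_mem _, rfl⟩⟩
      add_mem' := by
        rintro k k' ⟨c, hg, hw⟩ ⟨c', hg', hw'⟩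
        obtain ⟨c'', h⟩ := form_mul c k c' k'
        refine ⟨c'', ?_, ?_⟩
        · rw [← h]; exact mul_mem hg hg'
        · rw [← h]
          show (add c * a ^ k) ((add c' * a ^ k') w) = w
          rw [hw', hw]
      neg_mem' := by
        rintro k ⟨c, hg, hw⟩
        obtain ⟨c'', h⟩ := form_inv c k
        refine ⟨c'', ?_, ?_⟩
        · rw [← h]; exact inv_mem hg
        · rw [← h]
          exact (Function.IsFixedPt.perm_inv hw : _) } with hKdef
  obtain ⟨m, hK⟩ := Int.subgroup_cyclic K
  have hmK : m ∈ K := by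
    rw [hK]; exact AddSubgroup.mem_closure_singleton_self m
  obtain ⟨c₀, hg₀GA, hg₀w⟩ := hmK
  refine ⟨add c₀ * a ^ m, hg₀GA, hg₀w, ?_⟩
  intro h hGA hw
  obtain ⟨c, k, rfl⟩ := mem_form h hGA
  have hk : k ∈ K := ⟨c, hGA, hw⟩
  rw [hK] at hk
  obtain ⟨q, hq⟩ := AddSubgroup.mem_closure_singleton.mp hk
  refine ⟨q, ?_⟩
  obtain ⟨cq, hcq⟩ := form_zpow c₀ m q
  have hqm : q * m = k := by rw [← hq, smul_eq_mul]
  have h2 : (add cq * a ^ k) w = w := by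
    rw [← hqm, ← hcq]
    exact Function.IsFixedPt.perm_zpow hg₀w q
  have hc : c = cq := by
    funext n
    have e1 : add c ((a ^ k) w) n = w n := congrFun hw n
    have e2 : add cq ((a ^ k) w) n = w n := congrFun h2 n
    rw [add_apply] at e1 e2
    have := e1.trans e2.symm
    exact add_left_cancel this
  rw [hcq, hqm, hc]

end Lamplighter
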